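/- For every k ∈ ω, the poset P_k is not (3,3)-representable. -/

import Mathlib

open Cardinal

universe u

/-- A field of sets: a collection of subsets of `X` closed under finite unions,
finite intersections, and complements. -/
def IsFieldOfSets {X : Type u} (F : Set (Set X)) : Prop :=
  ∅ ∈ F ∧ Set.univ ∈ F ∧ (∀ A ∈ F, ∀ B ∈ F, A ∪ B ∈ F) ∧
    (∀ A ∈ F, ∀ B ∈ F, A ∩ B ∈ F) ∧ (∀ A ∈ F, Aᶜ ∈ F)

/-- A poset `P` is `(α,β)`-representable if there is a field of sets `F` and an
injective map `h : P → F` preserving all existing meets of sets of cardinality `< α`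
and all existing joins of sets of cardinality `< β`. -/
def IsRepresentable (α β : Cardinal.{u}) (P : Type u) [PartialOrder P] : Prop :=
  ∃ (X : Type u) (F : Set (Set X)) (h : P → Set X),
    IsFieldOfSets F ∧ (∀ p : P, h p ∈ F) ∧ Function.Injective h ∧
    (∀ S : Set P, #S < α → ∀ a : P, IsGLB S a → h a = ⋂ s ∈ S, h s) ∧
    (∀ T : Set P, #T < β → ∀ a : P, IsLUB T a → h a = ⋃ t ∈ T, h t)

/-- The levels `N n`: `N 0` has four elements (`a`, `b`, `c`, `d`), and `N (n+1)` has one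
element `e_{xy}` for each unordered pair of distinct elements `x`, `y` of `N n`. -/
def N : ℕ → Type
  | 0 => Fin 4
  | n + 1 => { s : Sym2 (N n) // ¬s.IsDiag }

/-- The element `e_{xy}` of `N (n+1)` corresponding to distinct `x y : N n`. -/
def mkE {n : ℕ} (x y : N n) (h : x ≠ y) : N (n + 1) :=
  ⟨s(x, y), by simp [h]⟩

/-- The carrier of the poset `P_k`: the elements `p`, `q`, the elements of `N n` for
`n ≤ k` (constructor `node`), and two elements `x'` (constructor `prime`) and `x''`
(constructor `dprime`) for every element `x` of `N n` with `n ≤ k`. -/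
inductive Elt (k : ℕ) : Type
  | p : Elt k
  | q : Elt k
  | node (n : ℕ) (hn : n ≤ k) (x : N n) : Elt k
  | prime (n : ℕ) (hn : n ≤ k) (x : N n) : Elt k
  | dprime (n : ℕ) (hn : n ≤ k) (x : N n) : Elt k

/-- The order on `P_k`: (1) `x < p` for `x ∈ N₀`; (2) `x < x'` and `x < x''` for
`x ∈ N_n`, `n ≤ k`; (3) `e_{xy} < x', x'', y', y''` for `e_{xy} ∈ N_{n+1}`, `n + 1 ≤ k`;
(4) `q < x'` and `q < x''` for `x ∈ N_k`; (5) reflexivity; and nothing else. -/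
inductive Le (k : ℕ) : Elt k → Elt k → Prop
  | refl (x : Elt k) : Le k x x
  | node_p (h0 : 0 ≤ k) (x : N 0) : Le k (.node 0 h0 x) .p
  | node_prime (n : ℕ) (hn : n ≤ k) (x : N n) : Le k (.node n hn x) (.prime n hn x)
  | node_dprime (n : ℕ) (hn : n ≤ k) (x : N n) : Le k (.node n hn x) (.dprime n hn x)
  | e_prime (n : ℕ) (hn : n + 1 ≤ k) (e : N (n + 1)) (x : N n) (hx : x ∈ e.1) :
      Le k (.node (n + 1) hn e) (.prime n (Nat.le_of_succ_le hn) x)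
  | e_dprime (n : ℕ) (hn : n + 1 ≤ k) (e : N (n + 1)) (x : N n) (hx : x ∈ e.1) :
      Le k (.node (n + 1) hn e) (.dprime n (Nat.le_of_succ_le hn) x)
  | q_prime (x : N k) : Le k .q (.prime k le_rfl x)
  | q_dprime (x : N k) : Le k .q (.dprime k le_rfl x)

lemma Le.eq_of_le_node {k n : ℕ} {x : Elt k} {hn : n ≤ k} {w : N n}
    (h : Le k x (Elt.node n hn w)) : x = Elt.node n hn w := by
  cases h; rfl

lemma Le.eq_of_le_q {k : ℕ} {x : Elt k} (h : Le k x Elt.q) : x = Elt.q := by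
  cases h; rfl

lemma Le.left_cases {k : ℕ} {x y : Elt k} (h : Le k x y) :
    x = y ∨ (∃ n hn w, x = Elt.node n hn w) ∨ x = Elt.q := by
  cases h with
  | refl => exact Or.inl rfl
  | node_p h0 w => exact Or.inr (Or.inl ⟨_, _, _, rfl⟩)
  | node_prime n hn w => exact Or.inr (Or.inl ⟨_, _, _, rfl⟩)
  | node_dprime n hn w => exact Or.inr (Or.inl ⟨_, _, _, rfl⟩)
  | e_prime n hn e w hw => exact Or.inr (Or.inl ⟨_, _, _, rfl⟩)
  | e_dprime n hn e w hw => exact Or.inr (Or.inl ⟨_, _, _, rfl⟩)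
  | q_prime w => exact Or.inr (Or.inr rfl)
  | q_dprime w => exact Or.inr (Or.inr rfl)

/-- `P_k` as a partial order, with order relation `Le k`. -/
instance EltPartialOrder (k : ℕ) : PartialOrder (Elt k) where
  le := Le k
  le_refl := Le.refl
  le_trans := by
    intro x y z h1 h2
    rcases h2.left_cases with rfl | ⟨n, hn, w, rfl⟩ | rfl
    · exact h1
    · rw [h1.eq_of_le_node]; exact h2
    · rw [h1.eq_of_le_q]; exact h2
  le_antisymm := by
    intro x y h1 h2
    rcases h1.left_cases with rfl | ⟨n, hn, w, rfl⟩ | rfl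
    · rfl
    · exact (h2.eq_of_le_node).symm
    · exact (h2.eq_of_le_q).symm


lemma mk_pair_lt_three {P : Type u} (a b : P) : #(↥({a, b} : Set P)) < 3 := by
  have h1 : #(↥({a, b} : Set P)) ≤ 1 + 1 := by
    have := Cardinal.mk_insert_le (s := ({b} : Set P)) (a := a)
    simpa using this
  exact h1.trans_lt (by norm_num)

lemma le_p_inv {k : ℕ} {z : Elt k} (h : Le k z Elt.p) :
    z = Elt.p ∨ ∃ x : N 0, z = Elt.node 0 (Nat.zero_le k) x := by
  cases h with
  | refl => exact Or.inl rfl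
  | node_p h0 x => exact Or.inr ⟨x, rfl⟩

lemma le_prime_inv {k n : ℕ} {hn : n ≤ k} {x : N n} {z : Elt k}
    (h : Le k z (Elt.prime n hn x)) :
    z = Elt.prime n hn x ∨ z = Elt.node n hn x ∨
      (∃ (hn1 : n + 1 ≤ k) (e : N (n + 1)), x ∈ e.1 ∧ z = Elt.node (n + 1) hn1 e) ∨
      (n = k ∧ z = Elt.q) := by
  cases h with
  | refl => exact Or.inl rfl
  | node_prime => exact Or.inr (Or.inl rfl)
  | e_prime m hm e y hy => exact Or.inr (Or.inr (Or.inl ⟨hm, e, hy, rfl⟩))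
  | q_prime y => exact Or.inr (Or.inr (Or.inr ⟨rfl, rfl⟩))

lemma le_dprime_inv {k n : ℕ} {hn : n ≤ k} {x : N n} {z : Elt k}
    (h : Le k z (Elt.dprime n hn x)) :
    z = Elt.dprime n hn x ∨ z = Elt.node n hn x ∨
      (∃ (hn1 : n + 1 ≤ k) (e : N (n + 1)), x ∈ e.1 ∧ z = Elt.node (n + 1) hn1 e) ∨
      (n = k ∧ z = Elt.q) := by
  cases h with
  | refl => exact Or.inl rfl
  | node_dprime => exact Or.inr (Or.inl rfl)
  | e_dprime m hm e y hy => exact Or.inr (Or.inr (Or.inl ⟨hm, e, hy, rfl⟩))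
  | q_dprime y => exact Or.inr (Or.inr (Or.inr ⟨rfl, rfl⟩))

lemma node0_le_inv {k : ℕ} {h0 : 0 ≤ k} {x : N 0} {z : Elt k}
    (h : Le k (Elt.node 0 h0 x) z) :
    z = Elt.node 0 h0 x ∨ z = Elt.p ∨ z = Elt.prime 0 h0 x ∨ z = Elt.dprime 0 h0 x := by
  cases h with
  | refl => exact Or.inl rfl
  | node_p => exact Or.inr (Or.inl rfl)
  | node_prime => exact Or.inr (Or.inr (Or.inl rfl))
  | node_dprime => exact Or.inr (Or.inr (Or.inr rfl))

lemma mkE_mem_left {n : ℕ} (x y : N n) (h : x ≠ y) : x ∈ (mkE x y h).1 := by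
  simp [mkE]

lemma mkE_mem_right {n : ℕ} (x y : N n) (h : x ≠ y) : y ∈ (mkE x y h).1 := by
  simp [mkE]

lemma eq_mkE {n : ℕ} {e : N (n + 1)} {x y : N n} (h : x ≠ y)
    (hx : x ∈ e.1) (hy : y ∈ e.1) : e = mkE x y h := by
  apply Subtype.ext
  exact (Sym2.mem_and_mem_iff h).1 ⟨hx, hy⟩

lemma mkE_ne {n : ℕ} {x1 x2 y1 y2 : N n} (h : x1 ≠ x2) (h' : y1 ≠ y2)
    (hne : ¬((x1 = y1 ∧ x2 = y2) ∨ (x1 = y2 ∧ x2 = y1))) :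
    mkE x1 x2 h ≠ mkE y1 y2 h' := by
  intro heq
  apply hne
  have : s(x1, x2) = s(y1, y2) := congrArg Subtype.val heq
  exact Sym2.eq_iff.1 this

lemma isLUB_pair_p {k : ℕ} {x y : N 0} (hxy : x ≠ y) :
    IsLUB {Elt.node 0 (Nat.zero_le k) x, Elt.node 0 (Nat.zero_le k) y} (Elt.p : Elt k) := by
  constructor
  · rintro z (rfl | rfl)
    · exact Le.node_p _ x
    · exact Le.node_p _ y
  · intro z hz
    have hx' : Le k (Elt.node 0 (Nat.zero_le k) x) z := hz (Set.mem_insert _ _)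
    have hy' : Le k (Elt.node 0 (Nat.zero_le k) y) z := hz (Set.mem_insert_of_mem _ rfl)
    rcases node0_le_inv hx' with rfl | rfl | rfl | rfl
    · have := Le.eq_of_le_node hy'
      simp_all
    · exact Le.refl _
    · rcases le_prime_inv hy' with h | h | ⟨hn1, e, he, h⟩ | ⟨hk, h⟩ <;> simp_all
    · rcases le_dprime_inv hy' with h | h | ⟨hn1, e, he, h⟩ | ⟨hk, h⟩ <;> simp_all

lemma isGLB_p_prime {k : ℕ} (x : N 0) :
    IsGLB {Elt.p, Elt.prime 0 (Nat.zero_le k) x} (Elt.node 0 (Nat.zero_le k) x : Elt k) := by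
  constructor
  · rintro z (rfl | rfl)
    · exact Le.node_p _ x
    · exact Le.node_prime _ _ x
  · intro z hz
    have h1 : Le k z Elt.p := hz (Set.mem_insert _ _)
    have h2 : Le k z (Elt.prime 0 (Nat.zero_le k) x) := hz (Set.mem_insert_of_mem _ rfl)
    rcases le_p_inv h1 with rfl | ⟨w, rfl⟩
    · rcases le_prime_inv h2 with h | h | ⟨hn1, e, he, h⟩ | ⟨hk, h⟩ <;> simp_all
    · rcases le_prime_inv h2 with h | h | ⟨hn1, e, he, h⟩ | ⟨hk, h⟩
      · simp_all
      · obtain rfl : w = x := by simpa using h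
        exact Le.refl _
      · simp_all
      · simp_all

lemma isGLB_primes_e {k n : ℕ} (hn1 : n + 1 ≤ k) {x y : N n} (hxy : x ≠ y) :
    IsGLB {Elt.prime n (Nat.le_of_succ_le hn1) x, Elt.prime n (Nat.le_of_succ_le hn1) y}
      (Elt.node (n + 1) hn1 (mkE x y hxy) : Elt k) := by
  constructor
  · rintro z (rfl | rfl)
    · exact Le.e_prime n hn1 _ x (mkE_mem_left x y hxy)
    · exact Le.e_prime n hn1 _ y (mkE_mem_right x y hxy)
  · intro z hz
    have h1 : Le k z (Elt.prime n (Nat.le_of_succ_le hn1) x) := hz (Set.mem_insert _ _)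
    have h2 : Le k z (Elt.prime n (Nat.le_of_succ_le hn1) y) := hz (Set.mem_insert_of_mem _ rfl)
    rcases le_prime_inv h1 with rfl | rfl | ⟨hm, e, hxe, rfl⟩ | ⟨rfl, rfl⟩
    · rcases le_prime_inv h2 with h | h | ⟨hm2, e2, hye2, h⟩ | ⟨rfl, h⟩ <;> simp_all
    · rcases le_prime_inv h2 with h | h | ⟨hm2, e2, hye2, h⟩ | ⟨rfl, h⟩ <;> simp_all
    · rcases le_prime_inv h2 with h | h | ⟨hm2, e2, hye2, h⟩ | ⟨rfl, h⟩
      · simp_all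
      · simp_all
      · simp only [Elt.node.injEq] at h
        have hee : e = e2 := eq_of_heq h.2
        subst hee
        rw [eq_mkE hxy hxe hye2]
      · simp_all
    · omega

lemma isGLB_primes_q {k : ℕ} {x y : N k} (hxy : x ≠ y) :
    IsGLB {Elt.prime k le_rfl x, Elt.prime k le_rfl y} (Elt.q : Elt k) := by
  constructor
  · rintro z (rfl | rfl)
    · exact Le.q_prime x
    · exact Le.q_prime y
  · intro z hz
    have h1 : Le k z (Elt.prime k le_rfl x) := hz (Set.mem_insert _ _)
    have h2 : Le k z (Elt.prime k le_rfl y) := hz (Set.mem_insert_of_mem _ rfl)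
    rcases le_prime_inv h1 with rfl | rfl | ⟨hm, e, hxe, rfl⟩ | ⟨-, rfl⟩
    · rcases le_prime_inv h2 with h | h | ⟨hm2, e2, hye2, h⟩ | ⟨-, h⟩ <;> simp_all
    · rcases le_prime_inv h2 with h | h | ⟨hm2, e2, hye2, h⟩ | ⟨-, h⟩ <;> simp_all
    · omega
    · exact Le.refl _

lemma isGLB_prime_eprime {k n : ℕ} (hn1 : n + 1 ≤ k) (e : N (n + 1)) (w : N n)
    (hw : w ∈ e.1) :
    IsGLB {Elt.prime n (Nat.le_of_succ_le hn1) w, Elt.prime (n + 1) hn1 e}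
      (Elt.node (n + 1) hn1 e : Elt k) := by
  constructor
  · rintro z (rfl | rfl)
    · exact Le.e_prime n hn1 e w hw
    · exact Le.node_prime _ _ _
  · intro z hz
    have h1 : Le k z (Elt.prime n (Nat.le_of_succ_le hn1) w) := hz (Set.mem_insert _ _)
    have h2 : Le k z (Elt.prime (n + 1) hn1 e) := hz (Set.mem_insert_of_mem _ rfl)
    rcases le_prime_inv h1 with rfl | rfl | ⟨hm, f, hwf, rfl⟩ | ⟨rfl, rfl⟩
    · rcases le_prime_inv h2 with h | h | ⟨hm2, e2, hye2, h⟩ | ⟨hk2, h⟩ <;> simp_all <;> omega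
    · rcases le_prime_inv h2 with h | h | ⟨hm2, e2, hye2, h⟩ | ⟨hk2, h⟩ <;> simp_all <;> omega
    · rcases le_prime_inv h2 with h | h | ⟨hm2, e2, hye2, h⟩ | ⟨hk2, h⟩
      · simp_all
      · obtain rfl : f = e := by
          simp only [Elt.node.injEq] at h
          exact eq_of_heq h.2
        exact Le.refl _
      · simp_all
      · simp_all
    · omega

instance : DecidableEq (N 0) := inferInstanceAs (DecidableEq (Fin 4))

theorem statement11 (k : ℕ) : ¬IsRepresentable 3 3 (Elt k) := by
  rintro ⟨X, F, h, -, -, hinj, hglb, hlub⟩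
  have mono : ∀ {u v : Elt k}, Le k u v → h u ⊆ h v := by
    intro u v huv
    have hl : IsLUB {u, v} v := by
      constructor
      · rintro z (rfl | rfl)
        · exact huv
        · exact Le.refl _
      · intro z hz
        exact hz (Set.mem_insert_of_mem _ rfl)
    have he := hlub {u, v} (mk_pair_lt_three u v) v hl
    rw [Set.biUnion_pair] at he
    rw [he]
    exact Set.subset_union_left
  have glb_pair : ∀ {u v w : Elt k}, IsGLB {u, v} w → h w = h u ∩ h v := by
    intro u v w hg
    have := hglb {u, v} (mk_pair_lt_three u v) w hg
    rwa [Set.biInter_pair] at this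
  have lub_pair : ∀ {u v w : Elt k}, IsLUB {u, v} w → h w = h u ∪ h v := by
    intro u v w hg
    have := hlub {u, v} (mk_pair_lt_three u v) w hg
    rwa [Set.biUnion_pair] at this
  -- main claim: every point of h p is in every h (node 0 x)
  have main : ∀ t ∈ h (Elt.p : Elt k), ∀ x : N 0, t ∈ h (Elt.node 0 (Nat.zero_le k) x) := by
    intro t ht x
    have key : ∀ u v : N 0, u ≠ v →
        t ∈ h (Elt.node 0 (Nat.zero_le k) u) ∨ t ∈ h (Elt.node 0 (Nat.zero_le k) v) := by
      intro u v huv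
      have h1 := lub_pair (isLUB_pair_p (k := k) huv)
      have ht' := ht
      rw [h1] at ht'
      exact ht'
    -- a triple of distinct elements of N 0 whose images contain t
    have trip0 : ∃ a1 a2 a3 : N 0, a1 ≠ a2 ∧ a1 ≠ a3 ∧ a2 ≠ a3 ∧
        t ∈ h (Elt.node 0 (Nat.zero_le k) a1) ∧ t ∈ h (Elt.node 0 (Nat.zero_le k) a2) ∧
        t ∈ h (Elt.node 0 (Nat.zero_le k) a3) := by
      by_cases h0 : t ∈ h (Elt.node 0 (Nat.zero_le k) ((0 : Fin 4) : N 0))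
      · rcases key (1 : Fin 4) (2 : Fin 4) (by decide : ((1:Fin 4):N 0) ≠ (2:Fin 4)) with h1 | h1
        · rcases key (2 : Fin 4) (3 : Fin 4) (by decide : ((2:Fin 4):N 0) ≠ (3:Fin 4)) with h2 | h2
          · exact ⟨_, _, _, (by decide : ((0:Fin 4):N 0) ≠ (1:Fin 4)),
              (by decide : ((0:Fin 4):N 0) ≠ (2:Fin 4)),
              (by decide : ((1:Fin 4):N 0) ≠ (2:Fin 4)), h0, h1, h2⟩
          · exact ⟨_, _, _, (by decide : ((0:Fin 4):N 0) ≠ (1:Fin 4)),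
              (by decide : ((0:Fin 4):N 0) ≠ (3:Fin 4)),
              (by decide : ((1:Fin 4):N 0) ≠ (3:Fin 4)), h0, h1, h2⟩
        · rcases key (1 : Fin 4) (3 : Fin 4) (by decide : ((1:Fin 4):N 0) ≠ (3:Fin 4)) with h2 | h2
          · exact ⟨_, _, _, (by decide : ((0:Fin 4):N 0) ≠ (1:Fin 4)),
              (by decide : ((0:Fin 4):N 0) ≠ (2:Fin 4)),
              (by decide : ((1:Fin 4):N 0) ≠ (2:Fin 4)), h0, h2, h1⟩
          · exact ⟨_, _, _, (by decide : ((0:Fin 4):N 0) ≠ (2:Fin 4)),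
              (by decide : ((0:Fin 4):N 0) ≠ (3:Fin 4)),
              (by decide : ((2:Fin 4):N 0) ≠ (3:Fin 4)), h0, h1, h2⟩
      · have h1 := (key (0 : Fin 4) (1 : Fin 4) (by decide : ((0:Fin 4):N 0) ≠ (1:Fin 4))).resolve_left h0
        have h2 := (key (0 : Fin 4) (2 : Fin 4) (by decide : ((0:Fin 4):N 0) ≠ (2:Fin 4))).resolve_left h0
        have h3 := (key (0 : Fin 4) (3 : Fin 4) (by decide : ((0:Fin 4):N 0) ≠ (3:Fin 4))).resolve_left h0
        exact ⟨_, _, _, (by decide : ((1:Fin 4):N 0) ≠ (2:Fin 4)),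
          (by decide : ((1:Fin 4):N 0) ≠ (3:Fin 4)),
          (by decide : ((2:Fin 4):N 0) ≠ (3:Fin 4)), h1, h2, h3⟩
    -- climb: triples at every level
    have climb : ∀ n, ∀ hn : n ≤ k, ∃ x1 x2 x3 : N n,
        x1 ≠ x2 ∧ x1 ≠ x3 ∧ x2 ≠ x3 ∧
        t ∈ h (Elt.node n hn x1) ∧ t ∈ h (Elt.node n hn x2) ∧ t ∈ h (Elt.node n hn x3) := by
      intro n
      induction n with
      | zero => intro hn; exact trip0
      | succ n ih =>
        intro hn
        obtain ⟨x1, x2, x3, h12, h13, h23, m1, m2, m3⟩ := ih (Nat.le_of_succ_le hn)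
        refine ⟨mkE x1 x2 h12, mkE x1 x3 h13, mkE x2 x3 h23, ?_, ?_, ?_, ?_, ?_, ?_⟩
        · exact mkE_ne h12 h13 (by tauto)
        · exact mkE_ne h12 h23 (by tauto)
        · exact mkE_ne h13 h23 (by tauto)
        · rw [glb_pair (isGLB_primes_e hn h12)]
          exact ⟨mono (Le.node_prime _ _ _) m1, mono (Le.node_prime _ _ _) m2⟩
        · rw [glb_pair (isGLB_primes_e hn h13)]
          exact ⟨mono (Le.node_prime _ _ _) m1, mono (Le.node_prime _ _ _) m3⟩
        · rw [glb_pair (isGLB_primes_e hn h23)]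
          exact ⟨mono (Le.node_prime _ _ _) m2, mono (Le.node_prime _ _ _) m3⟩
    -- t is in h q
    have htq : t ∈ h (Elt.q : Elt k) := by
      obtain ⟨z1, z2, z3, g12, g13, g23, q1, q2, q3⟩ := climb k le_rfl
      rw [glb_pair (isGLB_primes_q g12)]
      exact ⟨mono (Le.node_prime _ _ _) q1, mono (Le.node_prime _ _ _) q2⟩
    -- descend: t is in every prime image
    have down : ∀ j n (hn : n ≤ k), k - n = j → ∀ x : N n, t ∈ h (Elt.prime n hn x) := by
      intro j
      induction j with
      | zero =>
        intro n hn hj x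
        obtain rfl : n = k := by omega
        exact mono (Le.q_prime x) htq
      | succ j ih =>
        intro n hn hj x
        have hn1 : n + 1 ≤ k := by omega
        obtain ⟨x1, x2, x3, h12, h13, h23, m1, m2, m3⟩ := climb n hn
        obtain ⟨w, hwx, hw⟩ : ∃ w : N n, w ≠ x ∧ t ∈ h (Elt.node n hn w) := by
          by_cases hx1 : x1 = x
          · refine ⟨x2, ?_, m2⟩
            rw [← hx1]
            exact h12.symm
          · exact ⟨x1, hx1, m1⟩
        have hmem_e : t ∈ h (Elt.node (n + 1) hn1 (mkE w x hwx)) := by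
          rw [glb_pair (isGLB_prime_eprime hn1 (mkE w x hwx) w (mkE_mem_left w x hwx))]
          exact ⟨mono (Le.node_prime _ _ _) hw, ih (n + 1) hn1 (by omega) (mkE w x hwx)⟩
        exact mono (Le.e_prime n hn1 (mkE w x hwx) x (mkE_mem_right w x hwx)) hmem_e
    have hprime0 : t ∈ h (Elt.prime 0 (Nat.zero_le k) x) := down (k - 0) 0 (Nat.zero_le k) rfl x
    rw [glb_pair (isGLB_p_prime x)]
    exact ⟨ht, hprime0⟩
  -- conclude: all four level-0 images equal h p, contradicting injectivity
  have hpx : ∀ x : N 0, h (Elt.node 0 (Nat.zero_le k) x) = h (Elt.p : Elt k) := by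
    intro x
    apply Set.Subset.antisymm (mono (Le.node_p _ x))
    intro t ht
    exact main t ht x
  have heq : (Elt.node 0 (Nat.zero_le k) ((0 : Fin 4) : N 0) : Elt k) =
      Elt.node 0 (Nat.zero_le k) ((1 : Fin 4) : N 0) :=
    hinj ((hpx _).trans (hpx _).symm)
  have : ((0 : Fin 4) : N 0) = ((1 : Fin 4) : N 0) := eq_of_heq (Elt.node.inj heq).2
  exact absurd this (by decide)
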